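/- Let K be a differential field of characteristic 0 and let n solutions b₁,…,bₙ of the linear system ∂Y = AY (A an n×n matrix over K) lie in a differential field extension with constant field C. Then b₁,…,bₙ are linearly independent over C if and only if the n×n matrix with columns b₁,…,bₙ is invertible. -/

import Mathlib

/-- Solutions b₁,…,bₙ of ∂Y = AY are linearly independent over the constants
iff the matrix with columns b₁,…,bₙ is invertible. -/
theorem stmt_0 {L : Type*} [Field L] [CharZero L] (D : L → L)
    (hadd : ∀ x y, D (x + y) = D x + D y)
    (hmul : ∀ x y, D (x * y) = x * D y + y * D x)
    {n : ℕ} (A : Matrix (Fin n) (Fin n) L) (b : Fin n → Fin n → L)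
    (hb : ∀ i, (fun j => D (b i j)) = A.mulVec (b i)) :
    ((∀ c : Fin n → L, (∀ i, D (c i) = 0) → ∑ i, c i • b i = 0 → ∀ i, c i = 0)
      ↔ IsUnit (Matrix.of fun i j => b j i)) := by
  classical
  have hD0 : D 0 = 0 := by simpa using hadd 0 0
  have hD1 : D 1 = 0 := by simpa using hmul 1 1
  have hDsum : ∀ (s : Finset (Fin n)) (f : Fin n → L),
      D (∑ i ∈ s, f i) = ∑ i ∈ s, D (f i) := by
    intro s f
    induction s using Finset.induction with
    | empty => simpa
    | @insert a s h ih => rw [Finset.sum_insert h, hadd, ih, Finset.sum_insert h]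
  set M : Matrix (Fin n) (Fin n) L := Matrix.of fun i j => b j i with hM
  have hmv : ∀ (c : Fin n → L) (j : Fin n), M.mulVec c j = ∑ i, b i j * c i := by
    intro c j
    simp [Matrix.mulVec, dotProduct, hM]
  constructor
  · intro hlin
    by_contra hMu
    have hdet : M.det = 0 := by
      by_contra h
      exact hMu (M.isUnit_iff_isUnit_det.mpr (isUnit_iff_ne_zero.mpr h))
    obtain ⟨v, hv, hvz⟩ := Matrix.exists_mulVec_eq_zero_iff.mpr hdet
    set P : ℕ → Prop := fun k => ∃ c : Fin n → L, c ≠ 0 ∧ M.mulVec c = 0 ∧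
      (Finset.univ.filter (fun i => c i ≠ 0)).card = k with hP
    have hPex : ∃ k, P k := ⟨_, v, hv, hvz, rfl⟩
    obtain ⟨c, hc0, hcz, hck⟩ := Nat.find_spec hPex
    obtain ⟨i₀, hi₀⟩ := Function.ne_iff.mp hc0
    simp only [Pi.zero_apply] at hi₀
    set c' : Fin n → L := fun i => c i / c i₀ with hc'
    have hc'i₀ : c' i₀ = 1 := div_self hi₀
    have hc'z : M.mulVec c' = 0 := by
      have : c' = (c i₀)⁻¹ • c := by funext i; simp [hc', div_eq_inv_mul]
      rw [this, Matrix.mulVec_smul, hcz, smul_zero]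
    have hc'supp : ∀ i, c' i ≠ 0 ↔ c i ≠ 0 := by
      intro i; simp [hc', div_eq_iff, hi₀]
    set d : Fin n → L := fun i => D (c' i) with hd
    have hrel : ∀ j, ∑ i, b i j * c' i = 0 := fun j => by
      rw [← hmv c' j, hc'z]; rfl
    have hdz : M.mulVec d = 0 := by
      funext j
      have h1 : D (∑ i, b i j * c' i) = 0 := by rw [hrel j, hD0]
      rw [hDsum] at h1
      have h2 : ∀ i, D (b i j * c' i) = b i j * d i + c' i * D (b i j) := by
        intro i; rw [hmul]
      simp only [h2, Finset.sum_add_distrib] at h1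
      have h3 : ∑ i, c' i * D (b i j) = 0 := by
        have hbD : ∀ i, D (b i j) = ∑ k, A j k * b i k := by
          intro i
          have := congrFun (hb i) j
          simpa [Matrix.mulVec, dotProduct] using this
        calc ∑ i, c' i * D (b i j) = ∑ i, ∑ k, A j k * (b i k * c' i) := by
              simp only [hbD, Finset.mul_sum]; congr 1; funext i; congr 1; funext k; ring
          _ = ∑ k, A j k * ∑ i, b i k * c' i := by
              rw [Finset.sum_comm]; simp [Finset.mul_sum]
          _ = 0 := by simp [hrel]
      rw [h3, add_zero] at h1
      rw [hmv]; simpa using h1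
    have hd0 : d = 0 := by
      by_contra hdne
      have hle : Nat.find hPex ≤ (Finset.univ.filter (fun i => d i ≠ 0)).card :=
        Nat.find_min' hPex ⟨d, hdne, hdz, rfl⟩
      have hsub : (Finset.univ.filter (fun i => d i ≠ 0)) ⊂
          (Finset.univ.filter (fun i => c i ≠ 0)) := by
        constructor
        · intro i hi
          simp only [Finset.mem_filter, Finset.mem_univ, true_and] at hi ⊢
          rw [← hc'supp i]
          intro h
          exact hi (by simp [hd, h, hD0])
        · intro hsup
          have : i₀ ∈ Finset.univ.filter (fun i => d i ≠ 0) :=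
            hsup (by simp [hi₀])
          simp only [Finset.mem_filter, Finset.mem_univ, true_and] at this
          exact this (by simp [hd, hc'i₀, hD1])
      have := Finset.card_lt_card hsub
      omega
    have hDc' : ∀ i, D (c' i) = 0 := fun i => congrFun hd0 i
    have hsum : ∑ i, c' i • b i = 0 := by
      funext j
      simp only [Finset.sum_apply, Pi.smul_apply, smul_eq_mul, Pi.zero_apply]
      rw [← hrel j]; congr 1; funext i; ring
    have := hlin c' hDc' hsum i₀
    rw [hc'i₀] at this
    exact one_ne_zero this
  · intro hMu c hDc hsum i
    have hz : M.mulVec c = 0 := by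
      funext j
      simp only [Pi.zero_apply]
      rw [hmv]
      have := congrFun hsum j
      simp only [Finset.sum_apply, Pi.smul_apply, smul_eq_mul, Pi.zero_apply] at this
      rw [← this]
      exact Finset.sum_congr rfl fun k _ => mul_comm _ _
    have hinj := Matrix.mulVec_injective_iff_isUnit.mpr hMu
    have : c = 0 := hinj (by rw [hz, Matrix.mulVec_zero])
    simp [this]
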